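/- Let K/k be a purely inseparable field extension of characteristic p > 0 of finite exponent (i.e., K^{p^e} ⊆ k for some e). Then a subset B of K is an r-basis of K/k (a minimal generating set of K over k(K^p)) if and only if B is a minimal generating set of K over k. -/

import Mathlib

open IntermediateField

variable (p : ℕ) (k K : Type*) [Field k] [Field K] [Algebra k K]

/-- `k(K^p)`. -/
noncomputable def kP : IntermediateField k K :=
  IntermediateField.adjoin k (Set.range fun x : K => x ^ p)

lemma frob_adjoin (hp : p.Prime) [CharP K p] (n : ℕ) (S : Set K) {x : K}
    (hx : x ∈ IntermediateField.adjoin k S) :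
    x ^ p ^ n ∈ IntermediateField.adjoin k ((fun z : K => z ^ p ^ n) '' S) := by
  haveI : Fact p.Prime := ⟨hp⟩
  induction hx using IntermediateField.adjoin_induction with
  | mem y hy => exact subset_adjoin _ _ ⟨y, hy, rfl⟩
  | algebraMap a =>
      rw [← map_pow]
      exact IntermediateField.algebraMap_mem _ _
  | add a b _ _ ha hb =>
      rw [add_pow_char_pow]
      exact add_mem ha hb
  | inv a _ ha =>
      rw [inv_pow]
      exact inv_mem ha
  | mul a b _ _ ha hb =>
      rw [mul_pow]
      exact mul_mem ha hb

lemma gen_descend (hp : p.Prime) [CharP K p] (e : ℕ)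
    (he : ∀ x : K, x ^ p ^ e ∈ (⊥ : IntermediateField k K)) (B : Set K)
    (H : IntermediateField.adjoin k (Set.range (fun x : K => x ^ p) ∪ B) = ⊤) :
    IntermediateField.adjoin k B = ⊤ := by
  have key : ∀ n : ℕ,
      IntermediateField.adjoin k (Set.range (fun x : K => x ^ p ^ (n + 1)) ∪ B) = ⊤ := by
    intro n
    induction n with
    | zero => simpa [pow_one] using H
    | succ n ih =>
      rw [eq_top_iff, ← ih, adjoin_le_iff]
      rintro y (⟨x, rfl⟩ | hy)
      · -- y = x ^ p ^ (n+1)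
        have hx : x ∈ IntermediateField.adjoin k (Set.range (fun x : K => x ^ p) ∪ B) := by
          rw [H]; trivial
        have := frob_adjoin p k K hp (n + 1) _ hx
        refine (IntermediateField.adjoin_le_iff.mpr ?_) this
        rintro z hz
        rw [Set.image_union] at hz
        rcases hz with ⟨w, ⟨u, rfl⟩, rfl⟩ | ⟨b, hb, rfl⟩
        · refine subset_adjoin _ _ (Or.inl ⟨u, ?_⟩)
          show u ^ p ^ (n + 1 + 1) = (u ^ p) ^ p ^ (n + 1)
          rw [← pow_mul, ← pow_succ']
        · have hbmem : b ∈ IntermediateField.adjoin k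
              (Set.range (fun x : K => x ^ p ^ (n + 1 + 1)) ∪ B) :=
            subset_adjoin _ _ (Or.inr hb)
          exact pow_mem hbmem (p ^ (n + 1))
      · exact subset_adjoin _ _ (Or.inr hy)
  rw [eq_top_iff, ← key e, adjoin_le_iff]
  rintro y (⟨x, rfl⟩ | hy)
  · have : x ^ p ^ e ∈ IntermediateField.adjoin k B := SetLike.le_def.mp bot_le (he x)
    have h2 : (x ^ p ^ e) ^ p ∈ IntermediateField.adjoin k B := pow_mem this p
    rwa [← pow_mul, ← pow_succ] at h2
  · exact subset_adjoin _ _ hy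

/-- If `K/k` is purely inseparable of finite exponent (`K^{p^e} ⊆ k`),
then `B` is an r-basis of `K/k` (minimal generating set over `k(K^p)`) iff `B` is a
minimal generating set of `K` over `k`. -/
theorem stmt_4 (hp : p.Prime) [CharP K p] [IsPurelyInseparable k K]
    (e : ℕ) (he : ∀ x : K, x ^ p ^ e ∈ (⊥ : IntermediateField k K)) (B : Set K) :
    (IntermediateField.adjoin ↥(kP p k K) B = ⊤ ∧
        ∀ x ∈ B, x ∉ IntermediateField.adjoin ↥(kP p k K) (B \ {x})) ↔
      (IntermediateField.adjoin k B = ⊤ ∧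
        ∀ x ∈ B, x ∉ IntermediateField.adjoin k (B \ {x})) := by
  set P : Set K := Set.range (fun x : K => x ^ p) with hP
  have bridge : ∀ S : Set K,
      (IntermediateField.adjoin ↥(kP p k K) S).restrictScalars k
        = IntermediateField.adjoin k (P ∪ S) :=
    fun S => IntermediateField.adjoin_adjoin_left k P S
  have memb : ∀ (S : Set K) (x : K),
      x ∈ IntermediateField.adjoin ↥(kP p k K) S ↔
        x ∈ IntermediateField.adjoin k (P ∪ S) := by
    intro S x
    rw [← bridge S, mem_restrictScalars]
  have topb : ∀ S : Set K,
      IntermediateField.adjoin ↥(kP p k K) S = ⊤ ↔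
        IntermediateField.adjoin k (P ∪ S) = ⊤ := by
    intro S
    rw [← bridge S]
    constructor
    · intro h; rw [h, restrictScalars_top]
    · intro h
      apply restrictScalars_injective k
      rwa [restrictScalars_top]
  constructor
  · rintro ⟨hgen, hmin⟩
    have hgenk : IntermediateField.adjoin k B = ⊤ :=
      gen_descend p k K hp e he B ((topb B).mp hgen)
    refine ⟨hgenk, fun x hx hmem => hmin x hx ?_⟩
    rw [memb]
    exact IntermediateField.adjoin.mono _ _ _ Set.subset_union_right hmem
  · rintro ⟨hgen, hmin⟩
    constructor
    · rw [topb]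
      rw [eq_top_iff, ← hgen, adjoin_le_iff]
      exact fun y hy => subset_adjoin _ _ (Or.inr hy)
    · intro x hx hmem
      rw [memb] at hmem
      have htop : IntermediateField.adjoin k (P ∪ (B \ {x})) = ⊤ := by
        rw [eq_top_iff, ← hgen, adjoin_le_iff]
        intro y hy
        by_cases hyx : y = x
        · subst hyx; exact hmem
        · exact subset_adjoin _ _ (Or.inr ⟨hy, hyx⟩)
      have := gen_descend p k K hp e he (B \ {x}) htop
      exact hmin x hx (by rw [this]; trivial)
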